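/- Let T: X → Y be a continuous linear map between topological real vector spaces and C ⊆ X convex. Then T(fri C) ⊆ fri(T(C)). -/

import Mathlib

open Pointwise

/-- A face of a convex set `C`: a convex subset `F ⊆ C` such that whenever a point of `F`
lies in the open segment between two points of `C`, both endpoints belong to `F`. -/
def IsFace {X : Type*} [AddCommGroup X] [Module ℝ X] (C F : Set X) : Prop :=
  F ⊆ C ∧ Convex ℝ F ∧
    ∀ x ∈ F, ∀ y ∈ C, ∀ z ∈ C, x ∈ openSegment ℝ y z → y ∈ F ∧ z ∈ F

/-- The minimal face of `C` containing `x`: the intersection of all faces containing `x`. -/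
def minFace {X : Type*} [AddCommGroup X] [Module ℝ X] (C : Set X) (x : X) : Set X :=
  ⋂₀ {F | IsFace C F ∧ x ∈ F}

/-- The conic hull of a set. -/
def coneHull {X : Type*} [AddCommGroup X] [Module ℝ X] (S : Set X) : Set X :=
  {w | ∃ (a : ℝ) (s : X), 0 ≤ a ∧ s ∈ S ∧ w = a • s}

/-- The intrinsic core of a convex set. -/
def icr {X : Type*} [AddCommGroup X] [Module ℝ X] (C : Set X) : Set X :=
  {x ∈ C | ∀ y ∈ C, ∃ z ∈ C, x ∈ openSegment ℝ y z}

/-- The face relative interior of a convex set in a topological vector space. -/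
def fri {X : Type*} [AddCommGroup X] [Module ℝ X] [TopologicalSpace X] (C : Set X) : Set X :=
  {x ∈ C | C ⊆ closure (minFace C x)}

/-- continuous linear images: `T(fri C) ⊆ fri (T(C))`. -/
theorem image_fri_subset {X Y : Type*} [AddCommGroup X] [Module ℝ X] [TopologicalSpace X]
    [IsTopologicalAddGroup X] [ContinuousSMul ℝ X]
    [AddCommGroup Y] [Module ℝ Y] [TopologicalSpace Y]
    [IsTopologicalAddGroup Y] [ContinuousSMul ℝ Y]
    (T : X →L[ℝ] Y) (C : Set X) (hC : Convex ℝ C) :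
    T '' (fri C) ⊆ fri (T '' C) := by
  rintro _ ⟨x, ⟨hxC, hxcl⟩, rfl⟩
  refine ⟨⟨x, hxC, rfl⟩, ?_⟩
  -- key: T '' (minFace C x) ⊆ minFace (T '' C) (T x)
  have key : T '' (minFace C x) ⊆ minFace (T '' C) (T x) := by
    rintro _ ⟨w, hw, rfl⟩
    rintro G ⟨⟨hGsub, hGconv, hGface⟩, hTxG⟩
    -- T⁻¹ G ∩ C is a face of C containing x
    have hFace : IsFace C (T ⁻¹' G ∩ C) ∧ x ∈ T ⁻¹' G ∩ C := by
      refine ⟨⟨Set.inter_subset_right, ?_, ?_⟩, hTxG, hxC⟩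
      · exact (hGconv.linear_preimage T.toLinearMap).inter hC
      · rintro a ⟨haG, haC⟩ y hy z hz hseg
        have hTseg : T a ∈ openSegment ℝ (T y) (T z) := by
          obtain ⟨s, t, hs, ht, hst, rfl⟩ := hseg
          exact ⟨s, t, hs, ht, hst, by simp [map_add, map_smul]⟩
        have := hGface (T a) haG (T y) ⟨y, hy, rfl⟩ (T z) ⟨z, hz, rfl⟩ hTseg
        exact ⟨⟨this.1, hy⟩, ⟨this.2, hz⟩⟩
    exact (hw _ hFace).1
  -- conclude
  rintro _ ⟨c, hc, rfl⟩
  have h1 : T c ∈ closure (T '' (minFace C x)) :=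
    (image_closure_subset_closure_image T.continuous) ⟨c, hxcl hc, rfl⟩
  exact closure_mono key h1
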